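/- Let n ≥ 1 and let T = MvPolynomial ((Fin n × Fin n) ⊕ (Fin n × Fin n)) ℂ be the polynomial ring over ℂ in 2n² variables Y_{ij} and Ξ_{ij} (1 ≤ i,j ≤ n). Let J ⊆ T be the ideal generated by: the polynomials δ_{ij} − Σ_{k=1}^n Y_{ki}Y_{kj} and δ_{ij} − Σ_{k=1}^n Y_{ik}Y_{jk} for 1 ≤ i ≤ j ≤ n; the polynomial 1 − det(Y); and the polynomials Σ_{k=1}^n (Y_{ki}Ξ_{kj} − Y_{kj}Ξ_{ki}) for 1 ≤ i < j ≤ n. Let J' ⊆ T be the ideal generated by the same orthogonality polynomials and 1 − det(Y) together with the polynomials Ξ_{ij} − Ξ_{ji} for 1 ≤ i < j ≤ n. Then the quotient rings T/J and T/J' are isomorphic as ℂ-algebras. -/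

import Mathlib

open MvPolynomial

/-- The variable `Y i j` of the polynomial ring in the two families of `n²` variables. -/
noncomputable def Yv (n : ℕ) (i j : Fin n) :
    MvPolynomial ((Fin n × Fin n) ⊕ (Fin n × Fin n)) ℂ :=
  X (Sum.inl (i, j))

/-- The variable `Ξ i j` of the polynomial ring in the two families of `n²` variables. -/
noncomputable def Xv (n : ℕ) (i j : Fin n) :
    MvPolynomial ((Fin n × Fin n) ⊕ (Fin n × Fin n)) ℂ :=
  X (Sum.inr (i, j))

/-- The determinant of the generic matrix `(Y i j)`. -/
noncomputable def detYv (n : ℕ) :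
    MvPolynomial ((Fin n × Fin n) ⊕ (Fin n × Fin n)) ℂ :=
  Matrix.det (Matrix.of fun i j : Fin n => Yv n i j)

/-- The generators `δᵢⱼ - Σₖ Y k i * Y k j`, `δᵢⱼ - Σₖ Y i k * Y j k` (for `i ≤ j`)
and `1 - det Y` cutting out the complex special orthogonal group. -/
def orthoGens (n : ℕ) :
    Set (MvPolynomial ((Fin n × Fin n) ⊕ (Fin n × Fin n)) ℂ) :=
  {p | ∃ i j : Fin n, i ≤ j ∧
      p = (if i = j then 1 else 0) - ∑ k, Yv n k i * Yv n k j} ∪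
  {p | ∃ i j : Fin n, i ≤ j ∧
      p = (if i = j then 1 else 0) - ∑ k, Yv n i k * Yv n j k} ∪
  {1 - detYv n}

abbrev Tn (n : ℕ) := MvPolynomial ((Fin n × Fin n) ⊕ (Fin n × Fin n)) ℂ

noncomputable def phi (n : ℕ) : Tn n →ₐ[ℂ] Tn n :=
  aeval (Sum.elim (fun p => Yv n p.1 p.2) (fun p => ∑ k, Yv n k p.1 * Xv n k p.2))

noncomputable def psi (n : ℕ) : Tn n →ₐ[ℂ] Tn n :=
  aeval (Sum.elim (fun p => Yv n p.1 p.2) (fun p => ∑ k, Yv n p.1 k * Xv n k p.2))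

@[simp] lemma phi_Y (n : ℕ) (i j : Fin n) : phi n (Yv n i j) = Yv n i j := by
  simp [phi, Yv]

@[simp] lemma phi_X (n : ℕ) (i j : Fin n) :
    phi n (Xv n i j) = ∑ k, Yv n k i * Xv n k j := by
  simp [phi, Xv]

@[simp] lemma psi_Y (n : ℕ) (i j : Fin n) : psi n (Yv n i j) = Yv n i j := by
  simp [psi, Yv]

@[simp] lemma psi_X (n : ℕ) (i j : Fin n) :
    psi n (Xv n i j) = ∑ k, Yv n i k * Xv n k j := by
  simp [psi, Xv]

lemma phi_det (n : ℕ) : phi n (detYv n) = detYv n := by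
  unfold detYv
  rw [AlgHom.map_det]
  congr 1
  ext i j
  simp

lemma psi_det (n : ℕ) : psi n (detYv n) = detYv n := by
  unfold detYv
  rw [AlgHom.map_det]
  congr 1
  ext i j
  simp

lemma phi_ortho (n : ℕ) {p : Tn n} (hp : p ∈ orthoGens n) : phi n p = p := by
  rcases hp with (⟨i, j, _, rfl⟩ | ⟨i, j, _, rfl⟩) | hp
  · simp [apply_ite (phi n)]
  · simp [apply_ite (phi n)]
  · rcases hp with rfl
    simp [phi_det]

lemma psi_ortho (n : ℕ) {p : Tn n} (hp : p ∈ orthoGens n) : psi n p = p := by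
  rcases hp with (⟨i, j, _, rfl⟩ | ⟨i, j, _, rfl⟩) | hp
  · simp [apply_ite (psi n)]
  · simp [apply_ite (psi n)]
  · rcases hp with rfl
    simp [psi_det]

/-- column orthogonality for all i j -/
lemma colA_mem (n : ℕ) (I : Ideal (Tn n)) (h : orthoGens n ⊆ I) (i j : Fin n) :
    (if i = j then (1 : Tn n) else 0) - ∑ k, Yv n k i * Yv n k j ∈ I := by
  rcases le_total i j with hij | hij
  · exact h (Or.inl (Or.inl ⟨i, j, hij, rfl⟩))
  · have hm : ((if j = i then (1 : Tn n) else 0) - ∑ k, Yv n k j * Yv n k i) ∈ I :=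
      h (Or.inl (Or.inl ⟨j, i, hij, rfl⟩))
    have e : ((if j = i then (1 : Tn n) else 0) - ∑ k, Yv n k j * Yv n k i)
        = (if i = j then (1 : Tn n) else 0) - ∑ k, Yv n k i * Yv n k j := by
      congr 1
      · exact if_congr eq_comm rfl rfl
      · exact Finset.sum_congr rfl fun k _ => mul_comm _ _
    rwa [e] at hm

lemma rowB_mem (n : ℕ) (I : Ideal (Tn n)) (h : orthoGens n ⊆ I) (i j : Fin n) :
    (if i = j then (1 : Tn n) else 0) - ∑ k, Yv n i k * Yv n j k ∈ I := by
  rcases le_total i j with hij | hij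
  · exact h (Or.inl (Or.inr ⟨i, j, hij, rfl⟩))
  · have hm : ((if j = i then (1 : Tn n) else 0) - ∑ k, Yv n j k * Yv n i k) ∈ I :=
      h (Or.inl (Or.inr ⟨j, i, hij, rfl⟩))
    have e : ((if j = i then (1 : Tn n) else 0) - ∑ k, Yv n j k * Yv n i k)
        = (if i = j then (1 : Tn n) else 0) - ∑ k, Yv n i k * Yv n j k := by
      congr 1
      · exact if_congr eq_comm rfl rfl
      · exact Finset.sum_congr rfl fun k _ => mul_comm _ _
    rwa [e] at hm

lemma delta_sum (n : ℕ) (i j : Fin n) :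
    ∑ l, (if i = l then (1 : Tn n) else 0) * Xv n l j = Xv n i j := by
  simp [ite_mul, Finset.sum_ite_eq]

lemma key (n : ℕ) (I : Ideal (Tn n)) (h : orthoGens n ⊆ I) (i j : Fin n) :
    (∑ l, (∑ k, Yv n k i * Yv n k l) * Xv n l j) - Xv n i j ∈ I := by
  have e : (∑ l, (∑ k, Yv n k i * Yv n k l) * Xv n l j) - Xv n i j
      = ∑ l, ((∑ k, Yv n k i * Yv n k l) - (if i = l then 1 else 0)) * Xv n l j := by
    rw [Finset.sum_congr rfl fun l _ => sub_mul _ _ _, Finset.sum_sub_distrib,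
      delta_sum]
  rw [e]
  refine Ideal.sum_mem _ fun l _ => Ideal.mul_mem_right _ _ ?_
  have := I.neg_mem (colA_mem n I h i l)
  rwa [neg_sub] at this

lemma keyB (n : ℕ) (I : Ideal (Tn n)) (h : orthoGens n ⊆ I) (i j : Fin n) :
    (∑ l, (∑ k, Yv n i k * Yv n l k) * Xv n l j) - Xv n i j ∈ I := by
  have e : (∑ l, (∑ k, Yv n i k * Yv n l k) * Xv n l j) - Xv n i j
      = ∑ l, ((∑ k, Yv n i k * Yv n l k) - (if i = l then 1 else 0)) * Xv n l j := by
    rw [Finset.sum_congr rfl fun l _ => sub_mul _ _ _, Finset.sum_sub_distrib,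
      delta_sum]
  rw [e]
  refine Ideal.sum_mem _ fun l _ => Ideal.mul_mem_right _ _ ?_
  have := I.neg_mem (rowB_mem n I h i l)
  rwa [neg_sub] at this

lemma rearrA (n : ℕ) (i j : Fin n) :
    ∑ k, Yv n k i * ∑ l, Yv n k l * Xv n l j
      = ∑ l, (∑ k, Yv n k i * Yv n k l) * Xv n l j := by
  simp only [Finset.mul_sum, Finset.sum_mul, mul_assoc]
  exact Finset.sum_comm

lemma rearrB (n : ℕ) (i j : Fin n) :
    ∑ k, Yv n i k * ∑ l, Yv n l k * Xv n l j
      = ∑ l, (∑ k, Yv n i k * Yv n l k) * Xv n l j := by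
  simp only [Finset.mul_sum, Finset.sum_mul, mul_assoc]
  exact Finset.sum_comm
noncomputable def Jid (n : ℕ) : Ideal (Tn n) :=
  Ideal.span (orthoGens n ∪
    {p | ∃ i j : Fin n, i < j ∧
        p = ∑ k, (Yv n k i * Xv n k j - Yv n k j * Xv n k i)})

noncomputable def J'id (n : ℕ) : Ideal (Tn n) :=
  Ideal.span (orthoGens n ∪ {p | ∃ i j : Fin n, i < j ∧ p = Xv n i j - Xv n j i})

lemma ortho_sub_J (n : ℕ) : orthoGens n ⊆ (Jid n : Set (Tn n)) :=
  fun _ hp => Ideal.subset_span (Or.inl hp)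

lemma ortho_sub_J' (n : ℕ) : orthoGens n ⊆ (J'id n : Set (Tn n)) :=
  fun _ hp => Ideal.subset_span (Or.inl hp)

lemma Xi_mem (n : ℕ) (i j : Fin n) : Xv n i j - Xv n j i ∈ J'id n := by
  rcases lt_trichotomy i j with h | rfl | h
  · exact Ideal.subset_span (Or.inr ⟨i, j, h, rfl⟩)
  · simp
  · have := (J'id n).neg_mem (Ideal.subset_span (Or.inr ⟨j, i, h, rfl⟩))
    rwa [neg_sub] at this

lemma S_mem (n : ℕ) (i j : Fin n) :
    ∑ k, (Yv n k i * Xv n k j - Yv n k j * Xv n k i) ∈ Jid n := by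
  rcases lt_trichotomy i j with h | rfl | h
  · exact Ideal.subset_span (Or.inr ⟨i, j, h, rfl⟩)
  · simp
  · have hm := (Jid n).neg_mem
      (Ideal.subset_span (Or.inr ⟨j, i, h, rfl⟩) :
        ∑ k, (Yv n k j * Xv n k i - Yv n k i * Xv n k j) ∈ Jid n)
    have e : -∑ k, (Yv n k j * Xv n k i - Yv n k i * Xv n k j)
        = ∑ k, (Yv n k i * Xv n k j - Yv n k j * Xv n k i) := by
      rw [← Finset.sum_neg_distrib]
      exact Finset.sum_congr rfl fun k _ => neg_sub _ _
    rwa [e] at hm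

lemma phi_gen_mem (n : ℕ) :
    ∀ p ∈ orthoGens n ∪ {p | ∃ i j : Fin n, i < j ∧ p = Xv n i j - Xv n j i},
      phi n p ∈ Jid n := by
  rintro p (hp | ⟨i, j, hij, rfl⟩)
  · rw [phi_ortho n hp]; exact ortho_sub_J n hp
  · rw [map_sub, phi_X, phi_X, ← Finset.sum_sub_distrib]
    exact S_mem n i j

lemma psi_gen_mem (n : ℕ) :
    ∀ p ∈ orthoGens n ∪
        {p | ∃ i j : Fin n, i < j ∧
            p = ∑ k, (Yv n k i * Xv n k j - Yv n k j * Xv n k i)},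
      psi n p ∈ J'id n := by
  rintro p (hp | ⟨i, j, hij, rfl⟩)
  · rw [psi_ortho n hp]; exact ortho_sub_J' n hp
  · have e : psi n (∑ k, (Yv n k i * Xv n k j - Yv n k j * Xv n k i))
        = (∑ l, (∑ k, Yv n k i * Yv n k l) * Xv n l j)
          - (∑ l, (∑ k, Yv n k j * Yv n k l) * Xv n l i) := by
      rw [map_sum]
      simp only [map_sub, map_mul, psi_Y, psi_X]
      rw [Finset.sum_sub_distrib, rearrA, rearrA]
    rw [e]
    have e2 : (∑ l, (∑ k, Yv n k i * Yv n k l) * Xv n l j)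
          - (∑ l, (∑ k, Yv n k j * Yv n k l) * Xv n l i)
        = ((∑ l, (∑ k, Yv n k i * Yv n k l) * Xv n l j) - Xv n i j)
          - ((∑ l, (∑ k, Yv n k j * Yv n k l) * Xv n l i) - Xv n j i)
          + (Xv n i j - Xv n j i) := by ring
    rw [e2]
    exact Ideal.add_mem _ (Ideal.sub_mem _ (key n _ (ortho_sub_J' n) i j)
      (key n _ (ortho_sub_J' n) j i)) (Xi_mem n i j)

noncomputable def Phi (n : ℕ) : Tn n ⧸ J'id n →ₐ[ℂ] Tn n ⧸ Jid n :=
  Ideal.Quotient.liftₐ (J'id n)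
    ((Ideal.Quotient.mkₐ ℂ (Jid n)).comp (phi n)) (by
      intro a ha
      have hle : J'id n ≤ Ideal.comap (phi n) (Jid n) :=
        Ideal.span_le.mpr (phi_gen_mem n)
      have : phi n a ∈ Jid n := hle ha
      show Ideal.Quotient.mk (Jid n) (phi n a) = 0
      exact Ideal.Quotient.eq_zero_iff_mem.mpr this)

noncomputable def Psi (n : ℕ) : Tn n ⧸ Jid n →ₐ[ℂ] Tn n ⧸ J'id n :=
  Ideal.Quotient.liftₐ (Jid n)
    ((Ideal.Quotient.mkₐ ℂ (J'id n)).comp (psi n)) (by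
      intro a ha
      have hle : Jid n ≤ Ideal.comap (psi n) (J'id n) :=
        Ideal.span_le.mpr (psi_gen_mem n)
      have : psi n a ∈ J'id n := hle ha
      show Ideal.Quotient.mk (J'id n) (psi n a) = 0
      exact Ideal.Quotient.eq_zero_iff_mem.mpr this)

lemma Phi_mk (n : ℕ) (x : Tn n) :
    Phi n (Ideal.Quotient.mk (J'id n) x) = Ideal.Quotient.mk (Jid n) (phi n x) := by
  unfold Phi
  rw [Ideal.Quotient.liftₐ_apply]
  rfl

lemma Psi_mk (n : ℕ) (x : Tn n) :
    Psi n (Ideal.Quotient.mk (Jid n) x) = Ideal.Quotient.mk (J'id n) (psi n x) := by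
  unfold Psi
  rw [Ideal.Quotient.liftₐ_apply]
  rfl

lemma psi_comp_phi (n : ℕ) : (Psi n).comp (Phi n) = AlgHom.id ℂ _ := by
  refine Ideal.Quotient.algHom_ext ℂ (MvPolynomial.algHom_ext fun v => ?_)
  simp only [AlgHom.comp_apply, AlgHom.id_apply, Ideal.Quotient.mkₐ_eq_mk]
  rw [Phi_mk, Psi_mk]
  cases v with
  | inl p => simp [show (X (Sum.inl p) : Tn n) = Yv n p.1 p.2 from rfl]
  | inr p =>
    rw [show (X (Sum.inr p) : Tn n) = Xv n p.1 p.2 from rfl]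
    have e : psi n (phi n (Xv n p.1 p.2))
        = ∑ l, (∑ k, Yv n k p.1 * Yv n k l) * Xv n l p.2 := by
      rw [phi_X, map_sum]
      simp only [map_mul, psi_Y, psi_X]
      rw [rearrA]
    rw [e, Ideal.Quotient.eq]
    exact key n _ (ortho_sub_J' n) p.1 p.2

lemma phi_comp_psi (n : ℕ) : (Phi n).comp (Psi n) = AlgHom.id ℂ _ := by
  refine Ideal.Quotient.algHom_ext ℂ (MvPolynomial.algHom_ext fun v => ?_)
  simp only [AlgHom.comp_apply, AlgHom.id_apply, Ideal.Quotient.mkₐ_eq_mk]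
  rw [Psi_mk, Phi_mk]
  cases v with
  | inl p => simp [show (X (Sum.inl p) : Tn n) = Yv n p.1 p.2 from rfl]
  | inr p =>
    rw [show (X (Sum.inr p) : Tn n) = Xv n p.1 p.2 from rfl]
    have e : phi n (psi n (Xv n p.1 p.2))
        = ∑ l, (∑ k, Yv n p.1 k * Yv n l k) * Xv n l p.2 := by
      rw [psi_X, map_sum]
      simp only [map_mul, phi_Y, phi_X]
      rw [rearrB]
    rw [e, Ideal.Quotient.eq]
    exact keyB n _ (ortho_sub_J n) p.1 p.2

theorem quotient_by_J_iso_quotient_by_Jprime (n : ℕ) (hn : 1 ≤ n) :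
    let T := MvPolynomial ((Fin n × Fin n) ⊕ (Fin n × Fin n)) ℂ
    let J : Ideal T := Ideal.span
      (orthoGens n ∪
        {p | ∃ i j : Fin n, i < j ∧
            p = ∑ k, (Yv n k i * Xv n k j - Yv n k j * Xv n k i)})
    let J' : Ideal T := Ideal.span
      (orthoGens n ∪ {p | ∃ i j : Fin n, i < j ∧ p = Xv n i j - Xv n j i})
    Nonempty ((T ⧸ J) ≃ₐ[ℂ] (T ⧸ J')) := by
  exact ⟨AlgEquiv.ofAlgHom (Psi n) (Phi n) (psi_comp_phi n) (phi_comp_psi n)⟩
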